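/- Let F be a feasible R-special directed solution. Then for every v ∈ R there exists an interval I = {a,…,b} ⊆ V(H) such that the set of descendants of v in the arborescence (R,F) equals R ∩ I. -/
import Mathlib


/-- `Reach F u v`: there is a directed path of links of `F` from `u` to `v`. -/
def Reach (F : Finset (ℕ × ℕ)) (u v : ℕ) : Prop :=
  Relation.ReflTransGen (fun a b => (a, b) ∈ F) u v

/-- A directed link `(u,v)` enters a cut `C` if `v ∈ C` and `u ∉ C`. -/
def Enters (f : ℕ × ℕ) (C : Set ℕ) : Prop := f.2 ∈ C ∧ f.1 ∉ C

/-- Two directed links cross if their intervals `[a,b]`, `[c,d]` satisfy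
`a < c < b < d` or `c < a < d < b`. -/
def Crosses (f g : ℕ × ℕ) : Prop :=
  (min f.1 f.2 < min g.1 g.2 ∧ min g.1 g.2 < max f.1 f.2 ∧ max f.1 f.2 < max g.1 g.2) ∨
    (min g.1 g.2 < min f.1 f.2 ∧ min f.1 f.2 < max g.1 g.2 ∧ max g.1 g.2 < max f.1 f.2)

/-- `F` is an `R`-special directed solution (with root `r = 0`):
(1) the endpoints of every link are distinct and lie in `R`;
(2) `(R, F)` is an `r`-out arborescence;
(3) no two links of `F` cross;
(4) no two links of `F` leaving the same vertex go in the same direction. -/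
def RSpecial (R : Finset ℕ) (F : Finset (ℕ × ℕ)) : Prop :=
  (∀ f ∈ F, f.1 ≠ f.2 ∧ f.1 ∈ R ∧ f.2 ∈ R) ∧
    (∀ f ∈ F, f.2 ≠ 0) ∧
    (∀ v ∈ R, v ≠ 0 → ∃! f : ℕ × ℕ, f ∈ F ∧ f.2 = v) ∧
    (∀ v ∈ R, Reach F 0 v) ∧
    (∀ f ∈ F, ∀ g ∈ F, f ≠ g → ¬Crosses f g) ∧
    (∀ f ∈ F, ∀ g ∈ F, f ≠ g → f.1 = g.1 →
      ¬((f.1 < f.2 ∧ g.1 < g.2) ∨ (f.2 < f.1 ∧ g.2 < g.1)))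

/-- A ring-cut is an interval `{a, …, b}` with `1 ≤ a ≤ b ≤ n-1`. -/
def IsRingCut (n : ℕ) (C : Set ℕ) : Prop :=
  ∃ a b : ℕ, 1 ≤ a ∧ a ≤ b ∧ b ≤ n - 1 ∧ C = Set.Icc a b

/-- `F` is feasible: every dangerous ring-cut is entered by some link of `F`. -/
def FeasibleDir (n : ℕ) (R : Finset ℕ) (F : Finset (ℕ × ℕ)) : Prop :=
  ∀ C : Set ℕ, IsRingCut n C → (C ∩ ↑R).Nonempty → ∃ f ∈ F, Enters f C

/-- A link `f = (u,v) ∈ F` is responsible for a cut `C` if it enters `C` and no link on the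
unique directed path in `(R,F)` from the root to `u` (i.e. no link of `F` whose head is an
ancestor of `u`) enters `C`. -/
def Responsible (F : Finset (ℕ × ℕ)) (f : ℕ × ℕ) (C : Set ℕ) : Prop :=
  f ∈ F ∧ Enters f C ∧ ∀ g ∈ F, Reach F g.2 f.1 → ¬Enters g C

/-- `[a, b]` is the `v`-bad interval `I_v`: the maximal interval of `V(H)` containing `v`
that contains no terminal which is not a descendant of `v`. -/
def IsBadInterval (n : ℕ) (R : Finset ℕ) (F : Finset (ℕ × ℕ)) (v a b : ℕ) : Prop :=
  a ≤ v ∧ v ≤ b ∧ b ≤ n - 1 ∧ (∀ w ∈ R, a ≤ w → w ≤ b → Reach F v w) ∧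
    ∀ a' b' : ℕ, a' ≤ a → b ≤ b' → b' ≤ n - 1 →
      (∀ w ∈ R, a' ≤ w → w ≤ b' → Reach F v w) → a' = a ∧ b' = b


/-- If `v` reaches `b` and `w` lies strictly between `v` and `b`, then either `w` is on the
path (so reachable), or some link of the path straddles `w`. -/
lemma straddle (F : Finset (ℕ × ℕ)) {v b : ℕ} (h : Reach F v b) (w : ℕ) :
    ((v < w ∧ w < b) ∨ (b < w ∧ w < v)) →
      Reach F v w ∨ ∃ x y, (x, y) ∈ F ∧ Reach F v x ∧ min x y < w ∧ w < max x y := by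
  induction h with
  | refl => intro hw; omega
  | @tail c d hvc hcd ih =>
    intro hw
    by_cases hcw : c = w
    · subst hcw; exact Or.inl hvc
    · by_cases hstr : min c d < w ∧ w < max c d
      · exact Or.inr ⟨c, d, hcd, hvc, hstr.1, hstr.2⟩
      · apply ih; omega

/-- Shared final step of `convex`. -/
lemma convex_aux (F : Finset (ℕ × ℕ))
    (hnc : ∀ f ∈ F, ∀ g ∈ F, f ≠ g → ¬Crosses f g)
    {p w v x y : ℕ}
    (ih : ∀ v u u', Reach F v u → Reach F v u' → u ≤ p → p ≤ u' → Reach F v p)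
    (hpw : (p, w) ∈ F) (hxy : (x, y) ∈ F) (hvx : Reach F v x)
    (hm : min x y < w) (hM : w < max x y) : Reach F v w := by
  have hvy : Reach F v y := hvx.tail hxy
  by_cases hgh : (p, w) = (x, y)
  · have : w = y := congrArg Prod.snd hgh
    subst this; exact hvy
  · have hnc' := hnc (p, w) hpw (x, y) hxy hgh
    simp only [Crosses, not_or] at hnc'
    have hp : min x y ≤ p ∧ p ≤ max x y := by omega
    have hvmin : Reach F v (min x y) := by
      rcases le_total x y with h | h
      · rwa [min_eq_left h]
      · rwa [min_eq_right h]
    have hvmax : Reach F v (max x y) := by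
      rcases le_total x y with h | h
      · rwa [max_eq_right h]
      · rwa [max_eq_left h]
    exact (ih v (min x y) (max x y) hvmin hvmax hp.1 hp.2).tail hpw

/-- Convexity of descendant sets, from the non-crossing condition. -/
lemma convex (F : Finset (ℕ × ℕ))
    (hnc : ∀ f ∈ F, ∀ g ∈ F, f ≠ g → ¬Crosses f g)
    {w : ℕ} (hw : Reach F 0 w) :
    ∀ v u u', Reach F v u → Reach F v u' → u ≤ w → w ≤ u' → Reach F v w := by
  induction hw with
  | refl =>
    intro v u u' hu _ h1 _
    have : u = 0 := Nat.le_zero.mp h1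
    subst this; exact hu
  | @tail p w h0p hpw ih =>
    intro v u u' hu hu' h1 h2
    rcases h1.lt_or_eq with h1 | rfl
    swap
    · exact hu
    rcases h2.lt_or_eq with h2 | rfl
    swap
    · exact hu'
    rcases lt_trichotomy v w with hvw | rfl | hvw
    · -- v < w < u'
      rcases straddle F hu' w (Or.inl ⟨hvw, h2⟩) with h | ⟨x, y, hxy, hvx, hm, hM⟩
      · exact h
      · exact convex_aux F hnc ih hpw hxy hvx hm hM
    · exact Relation.ReflTransGen.refl
    · -- u < w < v
      rcases straddle F hu w (Or.inr ⟨h1, hvw⟩) with h | ⟨x, y, hxy, hvx, hm, hM⟩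
      · exact h
      · exact convex_aux F hnc ih hpw hxy hvx hm hM

/-- For a feasible `R`-special directed solution, the set of descendants of any `v ∈ R`
is of the form `R ∩ I` for some ring interval `I = {a, …, b} ⊆ V(H)`. -/
theorem stmt3 (n : ℕ) (hn : 3 ≤ n) (R : Finset ℕ) (hR : R ⊆ Finset.range n) (hr : 0 ∈ R)
    (F : Finset (ℕ × ℕ)) (hsp : RSpecial R F) (hfeas : FeasibleDir n R F) :
    ∀ v ∈ R, ∃ a b : ℕ, a ≤ b ∧ b ≤ n - 1 ∧
      {w : ℕ | w ∈ R ∧ Reach F v w} = ↑R ∩ Set.Icc a b := by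
  classical
  intro v hv
  set D := R.filter (fun w => Reach F v w) with hD
  have hmemD : ∀ w, w ∈ D ↔ w ∈ R ∧ Reach F v w := by
    intro w; simp [hD]
  have hvD : v ∈ D := (hmemD v).mpr ⟨hv, Relation.ReflTransGen.refl⟩
  have hne : D.Nonempty := ⟨v, hvD⟩
  refine ⟨D.min' hne, D.max' hne, D.min'_le _ hvD |>.trans (D.le_max' _ hvD), ?_, ?_⟩
  · have hmem := (hmemD _).mp (D.max'_mem hne)
    have := Finset.mem_range.mp (hR hmem.1)
    omega
  · ext w
    simp only [Set.mem_setOf_eq, Set.mem_inter_iff, Finset.mem_coe, Set.mem_Icc]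
    constructor
    · rintro ⟨hwR, hwr⟩
      exact ⟨hwR, D.min'_le w ((hmemD w).mpr ⟨hwR, hwr⟩),
        D.le_max' w ((hmemD w).mpr ⟨hwR, hwr⟩)⟩
    · rintro ⟨hwR, ha, hb⟩
      refine ⟨hwR, convex F hsp.2.2.2.2.1 (hsp.2.2.2.1 w hwR) v _ _
        ((hmemD _).mp (D.min'_mem hne)).2 ((hmemD _).mp (D.max'_mem hne)).2 ha hb⟩
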